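/- Let P be a primitive permutation group on a finite set Δ whose socle Soc(P) is non-abelian, and let P_y be the stabilizer of a point y ∈ Δ. Then every prime p for which the cyclic group of order p is a composition factor of P is also such that the cyclic group of order p is a composition factor of P_y; that is, Comp_A(P) ⊆ Comp_A(P_y). -/

import Mathlib

open Equiv

/-- `c` is a composition series of the group `G`, running from the trivial subgroup to `G`,
in which each term is normal in the next and there is no intermediate normal subgroup
(equivalently, each successive quotient is simple). -/
def IsCompositionChain {G : Type*} [Group G] {n : ℕ} (c : Fin (n + 1) → Subgroup G) : Prop :=
  c 0 = ⊥ ∧ c (Fin.last n) = ⊤ ∧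
    ∀ i : Fin n,
      c i.castSucc < c i.succ ∧
        ((c i.castSucc).subgroupOf (c i.succ)).Normal ∧
          ∀ K : Subgroup G, c i.castSucc < K → K ≤ c i.succ →
            (K.subgroupOf (c i.succ)).Normal → K = c i.succ

/-- The group `S` occurs as a composition factor of the group `G`: some composition series
of `G` has a step `c i ⊴ c (i+1)` whose quotient is isomorphic to `S` (expressed via a
surjective homomorphism from `c (i+1)` onto `S` with kernel `c i`). -/
def IsCompFactor (S : Type*) [Group S] (G : Type*) [Group G] : Prop :=
  ∃ (n : ℕ) (c : Fin (n + 1) → Subgroup G), IsCompositionChain c ∧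
    ∃ (i : Fin n) (f : ↥(c i.succ) →* S),
      Function.Surjective f ∧ f.ker = (c i.castSucc).subgroupOf (c i.succ)

/-- The cyclic group of (prime) order `p` occurs as a composition factor of `G`. -/
def HasCyclicCompFactor (G : Type*) [Group G] (p : ℕ) : Prop :=
  IsCompFactor (Multiplicative (ZMod p)) G

/-- The number of distinct primes `p` such that the cyclic group of order `p` occurs as a
composition factor of `G`; this is the number of isomorphism types of abelian composition
factors of `G`, i.e. `|Comp_A(G)|`. -/
noncomputable def abelianCompFactorCount (G : Type*) [Group G] : ℕ :=
  {p : ℕ | p.Prime ∧ HasCyclicCompFactor G p}.ncard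

/-- A permutation group `G ≤ Sym(Ω)` is transitive. -/
def IsTransitivePermGroup {Ω : Type*} (G : Subgroup (Equiv.Perm Ω)) : Prop :=
  ∀ a b : Ω, ∃ g ∈ G, g a = b

/-- `B` is a block for the permutation group `G ≤ Sym(Ω)`: every `g ∈ G` maps `B`
either onto itself or onto a set disjoint from `B`. -/
def IsBlockOf {Ω : Type*} (G : Subgroup (Equiv.Perm Ω)) (B : Set Ω) : Prop :=
  ∀ g ∈ G, (g : Equiv.Perm Ω) '' B = B ∨ Disjoint ((g : Equiv.Perm Ω) '' B) B

/-- A permutation group `G ≤ Sym(Ω)` is primitive: it is transitive and all of its blocks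
are trivial (subsingletons or all of `Ω`). -/
def IsPrimitivePermGroup {Ω : Type*} (G : Subgroup (Equiv.Perm Ω)) : Prop :=
  IsTransitivePermGroup G ∧ ∀ B : Set Ω, IsBlockOf G B → B.Subsingleton ∨ B = Set.univ

/-- The restriction homomorphism `H → Sym(Δ)` for a subgroup `H ≤ Sym(Ω)` leaving the
subset `Δ ⊆ Ω` invariant; its image is the permutation group `H^Δ` induced by `H` on `Δ`. -/
def inducedPermHom {Ω : Type*} (H : Subgroup (Equiv.Perm Ω)) (Δ : Set Ω)
    (hinv : ∀ g ∈ H, ∀ a ∈ Δ, g a ∈ Δ) : ↥H →* Equiv.Perm ↥Δ where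
  toFun g := Equiv.Perm.subtypePerm (g : Equiv.Perm Ω)
    (fun a => ⟨fun ha => by
      have h' := hinv _ (H.inv_mem g.2) _ ha
      simpa using h', fun ha => hinv g g.2 a ha⟩)
  map_one' := rfl
  map_mul' g₁ g₂ := rfl

/-- The socle of a group: the subgroup generated by all minimal normal subgroups. -/
def socle (G : Type*) [Group G] : Subgroup G :=
  ⨆ N ∈ {N : Subgroup G | N.Normal ∧ N ≠ ⊥ ∧
    ∀ K : Subgroup G, K.Normal → K ≠ ⊥ → K ≤ N → K = N}, N

namespace CompAux

open Pointwise

/-- A chain `l = [a, ..., b]` whose successive entries are related by `R`. -/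
inductive ChainFT {α : Type*} (R : α → α → Prop) : α → α → List α → Prop
  | nil (a : α) : ChainFT R a a [a]
  | cons {a b c : α} {l : List α} : R a b → ChainFT R b c l → ChainFT R a c (a :: l)

namespace ChainFT

variable {α : Type*} {R R' : α → α → Prop} {a b : α} {l : List α}

theorem ne_nil (h : ChainFT R a b l) : l ≠ [] := by cases h <;> simp

theorem length_pos (h : ChainFT R a b l) : 0 < l.length :=
  List.length_pos_iff.2 h.ne_nil

theorem head_eq (h : ChainFT R a b l) : l[0]'h.length_pos = a := by
  cases h <;> rfl

theorem last_eq (h : ChainFT R a b l) :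
    l[l.length - 1]'(by have := h.length_pos; omega) = b := by
  induction h with
  | nil a => rfl
  | @cons a b c l hr h ih =>
      have h0 : 0 < l.length := h.length_pos
      have : (a :: l).length - 1 = (l.length - 1) + 1 := by simp; omega
      simp only [this, List.getElem_cons_succ]
      exact ih

theorem get (h : ChainFT R a b l) (i : ℕ) (hi : i + 1 < l.length) :
    R (l[i]'(by omega)) (l[i+1]'hi) := by
  induction h generalizing i with
  | nil a => simp at hi
  | @cons a b c l hr h ih =>
      match i with
      | 0 =>
        have h0 : 0 < l.length := h.length_pos
        simpa [h.head_eq] using hr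
      | (j+1) =>
        have : j + 1 < l.length := by simpa using hi
        simpa using ih j this

theorem append {c : α} {l₂ : List α} (h₁ : ChainFT R a b l)
    (h₂ : ChainFT R b c l₂) : ChainFT R a c (l.dropLast ++ l₂) := by
  induction h₁ with
  | nil a => simpa using h₂
  | @cons a b' c' l' hr h ih =>
      rw [List.dropLast_cons_of_ne_nil h.ne_nil]
      exact ChainFT.cons hr (ih h₂)

theorem map {β : Type*} {R' : β → β → Prop} (f : α → β) (h : ChainFT R a b l)
    (hf : ∀ x y, R x y → R' (f x) (f y)) : ChainFT R' (f a) (f b) (l.map f) := by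
  induction h with
  | nil a => exact nil (f a)
  | cons hr h ih => exact cons (hf _ _ hr) ih

theorem congr_right {b' : α} (h : ChainFT R a b l) (hb : b = b') : ChainFT R a b' l := hb ▸ h

theorem mono (h : ChainFT R a b l) (hRR' : ∀ x y, R x y → R' x y) : ChainFT R' a b l := by
  induction h with
  | nil a => exact nil a
  | cons hr h ih => exact cons (hRR' _ _ hr) ih

end ChainFT

variable {G : Type*} [Group G]

/-- `A ⊴ B` (with `A ≤ B`), phrased elementwise. -/
def SubStep (A B : Subgroup G) : Prop :=
  A ≤ B ∧ ∀ b ∈ B, ∀ a ∈ A, b * a * b⁻¹ ∈ A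

/-- A composition step: matches the steps in `IsCompositionChain`. -/
def CompStep (A B : Subgroup G) : Prop :=
  A < B ∧ (A.subgroupOf B).Normal ∧
    ∀ K : Subgroup G, A < K → K ≤ B → (K.subgroupOf B).Normal → K = B

theorem subgroupOf_normal_of_forall {A B : Subgroup G}
    (h : ∀ b ∈ B, ∀ a ∈ A, b * a * b⁻¹ ∈ A) : (A.subgroupOf B).Normal := by
  constructor
  intro x hx g
  rcases x with ⟨x, hxB⟩
  rcases g with ⟨g, hgB⟩
  simp only [Subgroup.mem_subgroupOf] at hx ⊢
  exact h g hgB x hx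

theorem forall_of_subgroupOf_normal {A B : Subgroup G} (hAB : A ≤ B)
    (h : (A.subgroupOf B).Normal) : ∀ b ∈ B, ∀ a ∈ A, b * a * b⁻¹ ∈ A := by
  intro b hb a ha
  have : (⟨a, hAB ha⟩ : ↥B) ∈ A.subgroupOf B := by
    simpa [Subgroup.mem_subgroupOf] using ha
  have := h.conj_mem _ this ⟨b, hb⟩
  simpa [Subgroup.mem_subgroupOf] using this

theorem SubStep.normal {A B : Subgroup G} (h : SubStep A B) : (A.subgroupOf B).Normal :=
  subgroupOf_normal_of_forall h.2

theorem substep_of_normal {A B : Subgroup G} (hAB : A ≤ B)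
    (h : (A.subgroupOf B).Normal) : SubStep A B :=
  ⟨hAB, forall_of_subgroupOf_normal hAB h⟩

theorem CompStep.substep {A B : Subgroup G} (h : CompStep A B) : SubStep A B :=
  substep_of_normal h.1.le h.2.1

theorem card_lt_of_lt [Finite G] {A B : Subgroup G} (h : A < B) :
    Nat.card ↥A < Nat.card ↥B := by
  have h1 : Nat.card ↥A = (A : Set G).ncard := Nat.card_coe_set_eq _
  have h2 : Nat.card ↥B = (B : Set G).ncard := Nat.card_coe_set_eq _
  rw [h1, h2]
  exact Set.ncard_lt_ncard (SetLike.coe_ssubset_coe.2 h) (Set.toFinite _)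

theorem eq_of_le_of_card_le [Finite G] {A B : Subgroup G} (hle : A ≤ B)
    (hcard : Nat.card ↥B ≤ Nat.card ↥A) : A = B := by
  by_contra hne
  exact absurd hcard (not_le.2 (card_lt_of_lt (lt_of_le_of_ne hle hne)))

/-- Existence of a chain of composition steps between `K ⊴ H`. -/
theorem exists_compChain [Finite G] :
    ∀ (m : ℕ) (K H : Subgroup G), Nat.card ↥H ≤ m → SubStep K H →
      ∃ l, ChainFT CompStep K H l := by
  intro m
  induction m with
  | zero =>
      intro K H hcard _
      have := Nat.card_pos (α := ↥H)
      omega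
  | succ m ih =>
      intro K H hcard hKH
      by_cases hKH' : K = H
      · exact ⟨[K], hKH' ▸ ChainFT.nil K⟩
      have hlt : K < H := lt_of_le_of_ne hKH.1 hKH'
      -- the set of proper intermediate normal subgroups
      set s : Set (Subgroup G) := {L | K ≤ L ∧ L < H ∧ SubStep L H} with hs
      have hKs : K ∈ s := ⟨le_rfl, hlt, hKH⟩
      obtain ⟨M, hMs, hMmax⟩ := Set.Finite.exists_maximalFor (fun L : Subgroup G => Nat.card ↥L) s
        (Set.toFinite _) ⟨K, hKs⟩
      obtain ⟨hKM, hMH, hMHsub⟩ := hMs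
      have hstep : CompStep M H := by
        refine ⟨hMH, hMHsub.normal, ?_⟩
        intro K' hK1 hK2 hK3
        by_contra hne
        have hK's : K' ∈ s := ⟨le_trans hKM hK1.le, lt_of_le_of_ne hK2 hne,
          substep_of_normal hK2 hK3⟩
        have := hMmax hK's (le_of_lt (card_lt_of_lt hK1))
        exact absurd this (not_le.2 (card_lt_of_lt hK1))
      have hKMsub : SubStep K M := ⟨hKM, fun b hb a ha => hKH.2 b (hMH.le hb) a ha⟩
      have hcM : Nat.card ↥M ≤ m := by
        have := card_lt_of_lt hMH
        omega
      obtain ⟨l, hl⟩ := ih K M hcM hKMsub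
      exact ⟨_, hl.append (ChainFT.cons hstep (ChainFT.nil H))⟩

theorem card_le_global [Finite G] (H : Subgroup G) : Nat.card ↥H ≤ Nat.card G := by
  rw [← Subgroup.card_top (G := G)]
  exact Subgroup.card_le_of_le le_top

/-- Refine a subnormal chain to a chain of composition steps. -/
theorem refine_chain [Finite G] {D T : Subgroup G} {l : List (Subgroup G)}
    (h : ChainFT SubStep D T l) : ∃ l', ChainFT CompStep D T l' := by
  induction h with
  | nil a => exact ⟨[a], ChainFT.nil a⟩
  | @cons A B C l hr h ih =>
      obtain ⟨l', hl'⟩ := ih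
      obtain ⟨l₀, hl₀⟩ := exists_compChain (Nat.card G) A B (card_le_global B) hr
      exact ⟨_, hl₀.append hl'⟩



-- ## Part 2 : from a subnormal section of prime order to a composition factor

theorem zmod_subgroup {p : ℕ} (hp : p.Prime) (H : Subgroup (Multiplicative (ZMod p))) :
    H = ⊥ ∨ H = ⊤ := by
  haveI : NeZero p := ⟨hp.ne_zero⟩
  have hcard : Nat.card (Multiplicative (ZMod p)) = p := by
    rw [Nat.card_congr Multiplicative.toAdd, Nat.card_zmod]
  have hd := Subgroup.card_subgroup_dvd_card H
  rw [hcard] at hd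
  rcases hp.eq_one_or_self_of_dvd _ hd with h | h
  · exact Or.inl (Subgroup.card_eq_one.mp h)
  · exact Or.inr (Subgroup.eq_top_of_card_eq H (by rw [hcard, h]))

theorem zmod_exists_ne_one {p : ℕ} (hp : p.Prime) :
    ∃ a : Multiplicative (ZMod p), a ≠ 1 := by
  haveI : Fact (1 < p) := ⟨hp.one_lt⟩
  refine ⟨Multiplicative.ofAdd 1, fun h => ?_⟩
  have : (1 : ZMod p) = 0 := by
    simpa using congrArg Multiplicative.toAdd h
  exact one_ne_zero this

variable {G : Type*} [Group G]

theorem witness_cast {S : Type*} [Group S] {n : ℕ} {c : Fin (n+1) → Subgroup G} {i : Fin n}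
    {A B : Subgroup G} (hA : c i.castSucc = A) (hB : c i.succ = B)
    (f : ↥B →* S) (hs : Function.Surjective f) (hker : f.ker = A.subgroupOf B) :
    ∃ (f' : ↥(c i.succ) →* S),
      Function.Surjective f' ∧ f'.ker = (c i.castSucc).subgroupOf (c i.succ) := by
  subst hA; subst hB
  exact ⟨f, hs, hker⟩

theorem factor_of_chains {p : ℕ} {K D : Subgroup G}
    {l₁ l₂ : List (Subgroup G)}
    (h₁ : ChainFT CompStep ⊥ K l₁) (hKD : CompStep K D) (h₂ : ChainFT CompStep D ⊤ l₂)
    (f : ↥D →* Multiplicative (ZMod p)) (hfs : Function.Surjective f)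
    (hker : f.ker = K.subgroupOf D) : HasCyclicCompFactor G p := by
  classical
  set L : List (Subgroup G) := l₁ ++ l₂ with hLdef
  have hlen1 : 0 < l₁.length := h₁.length_pos
  have hlen2 : 0 < l₂.length := h₂.length_pos
  have hLlen : L.length = l₁.length + l₂.length := List.length_append
  set n : ℕ := L.length - 1 with hn
  have hLn : L.length = n + 1 := by omega
  have hcoe : ∀ i : Fin (n+1), (i : ℕ) < L.length := fun i => by omega
  set c : Fin (n+1) → Subgroup G := fun i => L[(i : ℕ)]'(hcoe i) with hc
  have hstep : ∀ (j : ℕ) (hj : j + 1 < L.length), CompStep (L[j]'(by omega)) (L[j+1]'hj) := by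
    intro j hj
    rcases lt_trichotomy (j+1) l₁.length with h | h | h
    · have e1 : L[j]'(by omega) = l₁[j]'(by omega) := List.getElem_append_left (by omega)
      have e2 : L[j+1]'hj = l₁[j+1]'h := List.getElem_append_left h
      rw [e1, e2]
      exact h₁.get j h
    · have e1 : L[j]'(by omega) = l₁[j]'(by omega) := List.getElem_append_left (by omega)
      have e1' : l₁[j]'(by omega) = K := by
        have := h₁.last_eq
        simpa [show l₁.length - 1 = j by omega] using this
      have e2 : L[j+1]'hj = l₂[(j+1) - l₁.length]'(by omega) :=
        List.getElem_append_right (by omega)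
      have e2' : l₂[(j+1) - l₁.length]'(by omega) = D := by
        have := h₂.head_eq
        simpa [show (j+1) - l₁.length = 0 by omega] using this
      rw [e1, e1', e2, e2']
      exact hKD
    · have e1 : L[j]'(by omega) = l₂[j - l₁.length]'(by omega) :=
        List.getElem_append_right (by omega)
      have e2 : L[j+1]'hj = l₂[(j+1) - l₁.length]'(by omega) :=
        List.getElem_append_right (by omega)
      rw [e1, e2]
      have := h₂.get (j - l₁.length) (by omega)
      simpa [show (j+1) - l₁.length = (j - l₁.length) + 1 by omega] using this
  have hchain : IsCompositionChain c := by
    refine ⟨?_, ?_, ?_⟩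
    · show L[(0 : ℕ)]'(by omega) = ⊥
      have e1 : L[(0:ℕ)]'(by omega) = l₁[0]'hlen1 := List.getElem_append_left hlen1
      rw [e1, h₁.head_eq]
    · show L[((Fin.last n : Fin (n+1)) : ℕ)]'(hcoe _) = ⊤
      have hlast : ((Fin.last n : Fin (n+1)) : ℕ) = n := rfl
      have e1 : L[((Fin.last n : Fin (n+1)) : ℕ)]'(hcoe _) = l₂[n - l₁.length]'(by omega) := by
        simp only [hlast]
        exact List.getElem_append_right (by omega)
      rw [e1]
      have := h₂.last_eq
      simpa [show n - l₁.length = l₂.length - 1 by omega] using this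
    · intro i
      have h := hstep (i : ℕ) (by omega)
      have e1 : c i.castSucc = L[(i : ℕ)]'(by omega) := by
        simp only [hc, Fin.coe_castSucc]
      have e2 : c i.succ = L[(i : ℕ)+1]'(by omega) := by
        simp only [hc, Fin.val_succ]
      rw [e1, e2]
      exact h
  have hi₀lt : l₁.length - 1 < n := by omega
  set i₀ : Fin n := ⟨l₁.length - 1, hi₀lt⟩ with hi₀
  have hA : c i₀.castSucc = K := by
    have e1 : c i₀.castSucc = L[l₁.length - 1]'(by omega) := by
      simp only [hc, Fin.coe_castSucc, hi₀]
    rw [e1]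
    have e2 : L[l₁.length - 1]'(by omega) = l₁[l₁.length - 1]'(by omega) :=
      List.getElem_append_left (by omega)
    rw [e2]
    exact h₁.last_eq
  have hB : c i₀.succ = D := by
    have e1 : c i₀.succ = L[(l₁.length - 1) + 1]'(by omega) := by
      simp only [hc, Fin.val_succ, hi₀]
    rw [e1]
    have e2 : L[(l₁.length - 1) + 1]'(by omega) = l₂[((l₁.length - 1) + 1) - l₁.length]'(by omega) :=
      List.getElem_append_right (by omega)
    rw [e2]
    have := h₂.head_eq
    simpa [show ((l₁.length - 1) + 1) - l₁.length = 0 by omega] using this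
  obtain ⟨f', hf's, hf'ker⟩ := witness_cast hA hB f hfs hker
  exact ⟨n, c, hchain, i₀, f', hf's, hf'ker⟩

theorem hasCyclic_of_section [Finite G] {p : ℕ} (hp : p.Prime) {D K : Subgroup G} (hKD : K ≤ D)
    {l : List (Subgroup G)} (hch : ChainFT SubStep D ⊤ l)
    (f : ↥D →* Multiplicative (ZMod p)) (hfs : Function.Surjective f)
    (hker : f.ker = K.subgroupOf D) : HasCyclicCompFactor G p := by
  have hKDn : (K.subgroupOf D).Normal := hker ▸ f.normal_ker
  have hmemker : ∀ (x : G) (hx : x ∈ D), f ⟨x, hx⟩ = 1 ↔ x ∈ K := by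
    intro x hx
    rw [← MonoidHom.mem_ker, hker, Subgroup.mem_subgroupOf]
  have hne : K ≠ D := by
    obtain ⟨a, ha⟩ := zmod_exists_ne_one hp
    obtain ⟨d, hd⟩ := hfs a
    intro hEq
    have : f d = 1 := by
      rcases d with ⟨d, hdD⟩
      rw [hmemker d hdD]
      exact hEq ▸ hdD
    exact ha (hd ▸ this)
  have hlt : K < D := lt_of_le_of_ne hKD hne
  have hmax : ∀ K' : Subgroup G, K < K' → K' ≤ D → (K'.subgroupOf D).Normal → K' = D := by
    intro K' h1 h2 h3
    have hJn : (Subgroup.map f (K'.subgroupOf D)).Normal := h3.map f hfs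
    rcases zmod_subgroup hp (Subgroup.map f (K'.subgroupOf D)) with hJ | hJ
    · exfalso
      obtain ⟨x, hxK', hxK⟩ := SetLike.exists_of_lt h1
      have hxD : x ∈ D := h2 hxK'
      have : f ⟨x, hxD⟩ ∈ Subgroup.map f (K'.subgroupOf D) :=
        ⟨⟨x, hxD⟩, by simpa [Subgroup.mem_subgroupOf] using hxK', rfl⟩
      rw [hJ] at this
      simp only [Subgroup.mem_bot] at this
      exact hxK ((hmemker x hxD).1 this)
    · refine le_antisymm h2 ?_
      intro d hd
      have : f ⟨d, hd⟩ ∈ Subgroup.map f (K'.subgroupOf D) := by rw [hJ]; trivial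
      obtain ⟨x, hxm, hxe⟩ := this
      have : f (⟨d, hd⟩ * x⁻¹) = 1 := by
        rw [map_mul, map_inv, hxe, mul_inv_cancel]
      have hmem : (d * (↑x)⁻¹ : G) ∈ K := by
        have hx' : ((⟨d, hd⟩ : ↥D) * x⁻¹ : ↥D) = ⟨d * (↑x)⁻¹, by
          exact Subgroup.mul_mem _ hd (Subgroup.inv_mem _ x.2)⟩ := rfl
        rw [hx'] at this
        exact (hmemker _ _).1 this
      have hxK' : (↑x : G) ∈ K' := by
        simpa [Subgroup.mem_subgroupOf] using hxm
      have := Subgroup.mul_mem _ (h1.le hmem) hxK'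
      simpa using this
  have hbotK : SubStep ⊥ K := ⟨bot_le, by intro b hb a ha; simp only [Subgroup.mem_bot] at ha ⊢; simp [ha]⟩
  obtain ⟨l₁, h₁⟩ := exists_compChain (Nat.card G) ⊥ K (card_le_global K) hbotK
  obtain ⟨l₂, h₂⟩ := refine_chain hch
  exact factor_of_chains h₁ ⟨hlt, hKDn, hmax⟩ h₂ f hfs hker

-- ## Part 3 : transfer lemmas

theorem substep_subgroupOf {A B H : Subgroup G} (h : SubStep A B) :
    SubStep (A.subgroupOf H) (B.subgroupOf H) := by
  constructor
  · intro x hx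
    rw [Subgroup.mem_subgroupOf] at hx ⊢
    exact h.1 hx
  · intro b hb a ha
    rw [Subgroup.mem_subgroupOf] at hb ha ⊢
    have : ((b * a * b⁻¹ : ↥H) : G) = (b : G) * a * (b : G)⁻¹ := by
      push_cast; ring_nf
    rw [this]
    exact h.2 _ hb _ ha

theorem substep_inf {A B C : Subgroup G} (h : SubStep A B) :
    SubStep (A ⊓ C) (B ⊓ C) := by
  constructor
  · exact inf_le_inf_right C h.1
  · intro b hb a ha
    rw [Subgroup.mem_inf] at hb ha ⊢
    exact ⟨h.2 b hb.1 a ha.1,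
      Subgroup.mul_mem _ (Subgroup.mul_mem _ hb.2 ha.2) (Subgroup.inv_mem _ hb.2)⟩

theorem mem_sup_normal {A N : Subgroup G} (hN : N.Normal) {x : G} :
    x ∈ A ⊔ N ↔ ∃ a ∈ A, ∃ n ∈ N, a * n = x := by
  have hset := Subgroup.mul_normal A N
  constructor
  · intro hx
    have hx2 : x ∈ ((A : Set G) * (N : Set G)) := by rw [← hset]; exact hx
    exact Set.mem_mul.1 hx2
  · rintro ⟨a, ha, n, hn, rfl⟩
    exact Subgroup.mul_mem_sup ha hn

theorem mem_normal_sup {N A : Subgroup G} (hN : N.Normal) {x : G} :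
    x ∈ N ⊔ A ↔ ∃ n ∈ N, ∃ a ∈ A, n * a = x := by
  have hset := Subgroup.normal_mul N A
  constructor
  · intro hx
    have hx2 : x ∈ ((N : Set G) * (A : Set G)) := by rw [← hset]; exact hx
    exact Set.mem_mul.1 hx2
  · rintro ⟨n, hn, a, ha, rfl⟩
    exact Subgroup.mul_mem _ (Subgroup.mem_sup_left hn) (Subgroup.mem_sup_right ha)

theorem substep_supinf {A B N H : Subgroup G} (hN : N.Normal) (h : SubStep A B) :
    SubStep ((A ⊔ N) ⊓ H) ((B ⊔ N) ⊓ H) := by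
  constructor
  · exact inf_le_inf_right H (sup_le_sup_right h.1 N)
  · intro z hz x hx
    rw [Subgroup.mem_inf] at hz hx ⊢
    refine ⟨?_, Subgroup.mul_mem _ (Subgroup.mul_mem _ hz.2 hx.2) (Subgroup.inv_mem _ hz.2)⟩
    obtain ⟨a, haA, ν, hν, hx'⟩ := (mem_sup_normal hN).1 hx.1
    obtain ⟨b, hbB, μ, hμ, hz'⟩ := (mem_sup_normal hN).1 hz.1
    have key : z * x * z⁻¹ =
        (b * a * b⁻¹) * ((b * (a⁻¹ * μ * a⁻¹⁻¹ * μ⁻¹) * b⁻¹) * (z * ν * z⁻¹)) := by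
      rw [← hx', ← hz']; group
    rw [key]
    have h1 : b * a * b⁻¹ ∈ A ⊔ N := Subgroup.mem_sup_left (h.2 b hbB a haA)
    have h2 : b * (a⁻¹ * μ * a⁻¹⁻¹ * μ⁻¹) * b⁻¹ ∈ N :=
      hN.conj_mem _ (Subgroup.mul_mem _ (hN.conj_mem _ hμ a⁻¹) (Subgroup.inv_mem _ hμ)) b
    have h3 : z * ν * z⁻¹ ∈ N := hN.conj_mem _ hν z
    exact Subgroup.mul_mem _ h1 (Subgroup.mem_sup_right (Subgroup.mul_mem _ h2 h3))

/-- Transporting a hom along a "diagonal" decomposition `z = d·n`. -/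
theorem exists_transfer_hom {M : Type*} [Group M] {N D H : Subgroup G} (hN : N.Normal)
    (f : ↥D →* M) (hker : ∀ (x : G) (hx : x ∈ D), x ∈ N → f ⟨x, hx⟩ = 1) :
    ∃ h : ↥((D ⊔ N) ⊓ H) →* M,
      ∀ (z : ↥((D ⊔ N) ⊓ H)) (d : G) (hd : d ∈ D), d⁻¹ * (z : G) ∈ N → h z = f ⟨d, hd⟩ := by
  classical
  have hex : ∀ z : ↥((D ⊔ N) ⊓ H), ∃ d : G, d ∈ D ∧ d⁻¹ * (z : G) ∈ N := by
    intro z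
    obtain ⟨d, hd, ν, hν, hz⟩ := (mem_sup_normal hN).1 ((Subgroup.mem_inf.1 z.2).1)
    refine ⟨d, hd, ?_⟩
    have : d⁻¹ * (z : G) = ν := by rw [← hz]; group
    rw [this]; exact hν
  have wd : ∀ (d d' : G) (hd : d ∈ D) (hd' : d' ∈ D) (x : G),
      d⁻¹ * x ∈ N → d'⁻¹ * x ∈ N → f ⟨d, hd⟩ = f ⟨d', hd'⟩ := by
    intro d d' hd hd' x h1 h2
    have hmem : d'⁻¹ * d ∈ N := by
      have : d'⁻¹ * d = (d'⁻¹ * x) * (d⁻¹ * x)⁻¹ := by group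
      rw [this]
      exact Subgroup.mul_mem _ h2 (Subgroup.inv_mem _ h1)
    have hDmem : d'⁻¹ * d ∈ D := Subgroup.mul_mem _ (Subgroup.inv_mem _ hd') hd
    have h1' : f ⟨d'⁻¹ * d, hDmem⟩ = 1 := hker _ _ hmem
    have heq : (⟨d'⁻¹ * d, hDmem⟩ : ↥D) = (⟨d', hd'⟩ : ↥D)⁻¹ * ⟨d, hd⟩ := rfl
    rw [heq, map_mul, map_inv] at h1'
    exact (inv_mul_eq_one.mp h1').symm
  set rep : ↥((D ⊔ N) ⊓ H) → G := fun z => Classical.choose (hex z) with hrep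
  have hrepD : ∀ z, rep z ∈ D := fun z => (Classical.choose_spec (hex z)).1
  have hrepN : ∀ z, (rep z)⁻¹ * (z : G) ∈ N := fun z => (Classical.choose_spec (hex z)).2
  refine ⟨{ toFun := fun z => f ⟨rep z, hrepD z⟩
            map_one' := ?_
            map_mul' := ?_ }, ?_⟩
  · show f ⟨rep 1, hrepD 1⟩ = 1
    have h1 : (1:G)⁻¹ * ((1 : ↥((D ⊔ N) ⊓ H)) : G) ∈ N := by
      simpa using Subgroup.one_mem N
    rw [wd (rep 1) 1 (hrepD 1) (Subgroup.one_mem D) ((1 : ↥((D ⊔ N) ⊓ H)) : G) (hrepN 1) h1]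
    exact map_one f
  · intro z w
    have hz := hrepN z
    have hw := hrepN w
    have hmulN : (rep z * rep w)⁻¹ * ((z * w : ↥((D ⊔ N) ⊓ H)) : G) ∈ N := by
      have hcoe : ((z * w : ↥((D ⊔ N) ⊓ H)) : G) = (z : G) * w := rfl
      have keyeq : (rep z * rep w)⁻¹ * ((z : G) * w) =
          ((rep w)⁻¹ * ((rep z)⁻¹ * z) * ((rep w)⁻¹)⁻¹) * ((rep w)⁻¹ * w) := by group
      rw [hcoe, keyeq]
      exact Subgroup.mul_mem _ (hN.conj_mem _ hz (rep w)⁻¹) hw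
    show f ⟨rep (z*w), hrepD _⟩ = f ⟨rep z, hrepD z⟩ * f ⟨rep w, hrepD w⟩
    rw [wd (rep (z*w)) (rep z * rep w) (hrepD _)
      (Subgroup.mul_mem _ (hrepD z) (hrepD w)) _ (hrepN (z*w)) hmulN]
    have heq : (⟨rep z * rep w, Subgroup.mul_mem _ (hrepD z) (hrepD w)⟩ : ↥D)
        = (⟨rep z, hrepD z⟩ : ↥D) * ⟨rep w, hrepD w⟩ := rfl
    rw [heq, map_mul]
  · intro z d hd hdN
    exact wd (rep z) d (hrepD z) hd z (hrepN z) hdN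


-- ## Part 4 : semisimple groups have no abelian subnormal sections

theorem bot_isComm : IsMulCommutative ↥(⊥ : Subgroup G) := by
  constructor; constructor
  intro a b
  have ha : (a : G) = 1 := a.2
  have hb : (b : G) = 1 := b.2
  apply Subtype.ext
  simp only [Subgroup.coe_mul, ha, hb, one_mul, mul_one]

theorem noncomm_exists {T : Subgroup G} (h : ¬IsMulCommutative ↥T) :
    ∃ a b : ↥T, a * b ≠ b * a := by
  by_contra hc
  push_neg at hc
  exact h ⟨⟨fun a b => hc a b⟩⟩

theorem isComm_down {T C : Subgroup G} (h : IsMulCommutative ↥(T.subgroupOf C)) (hTC : T ≤ C) :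
    IsMulCommutative ↥T := by
  constructor; constructor
  intro a b
  have := h.is_comm.comm ⟨⟨(a : G), hTC a.2⟩, by simpa [Subgroup.mem_subgroupOf] using a.2⟩
    ⟨⟨(b : G), hTC b.2⟩, by simpa [Subgroup.mem_subgroupOf] using b.2⟩
  apply Subtype.ext
  simpa [Subtype.ext_iff] using this

theorem simple_of_mulEquiv {α β : Type*} [Group α] [Group β] (e : α ≃* β)
    [IsSimpleGroup α] : IsSimpleGroup β := by
  haveI : Nontrivial β := Equiv.nontrivial e.symm.toEquiv
  exact IsSimpleGroup.isSimpleGroup_of_surjective e.toMonoidHom e.surjective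

theorem commute_of_simple_normal_ne {S T : Subgroup G}
    (hSn : S.Normal) (hTn : T.Normal) (hSs : IsSimpleGroup ↥S) (hTs : IsSimpleGroup ↥T)
    (hne : T ≠ S) : ∀ t ∈ T, ∀ s ∈ S, s * t = t * s := by
  have hint : (S ⊓ T).Normal := by
    constructor
    intro x hx g
    rw [Subgroup.mem_inf] at hx ⊢
    exact ⟨hSn.conj_mem _ hx.1 g, hTn.conj_mem _ hx.2 g⟩
  have hbot : S ⊓ T = ⊥ := by
    haveI := hSs
    rcases (hint.subgroupOf S).eq_bot_or_eq_top with h | h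
    · rw [eq_bot_iff]
      intro x hx
      have hmem : (⟨x, hx.1⟩ : ↥S) ∈ (S ⊓ T).subgroupOf S := Subgroup.mem_subgroupOf.2 hx
      rw [h] at hmem
      simpa [Subtype.ext_iff] using hmem
    · exfalso
      have hST : S ≤ T := by
        intro s hs
        have hmem : (⟨s, hs⟩ : ↥S) ∈ (S ⊓ T).subgroupOf S := by rw [h]; trivial
        exact (Subgroup.mem_subgroupOf.1 hmem).2
      haveI := hTs
      rcases (hSn.subgroupOf T).eq_bot_or_eq_top with h2 | h2
      · obtain ⟨⟨x, hx⟩, hx1⟩ := exists_ne (1 : ↥S)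
        have hmem : (⟨x, hST hx⟩ : ↥T) ∈ S.subgroupOf T := Subgroup.mem_subgroupOf.2 hx
        rw [h2] at hmem
        apply hx1
        apply Subtype.ext
        simpa [Subtype.ext_iff] using hmem
      · apply hne
        refine le_antisymm ?_ hST
        intro t ht
        have hmem : (⟨t, ht⟩ : ↥T) ∈ S.subgroupOf T := by rw [h2]; trivial
        exact Subgroup.mem_subgroupOf.1 hmem
  intro t ht s hs
  have hc : s * t * s⁻¹ * t⁻¹ ∈ S ⊓ T := by
    rw [Subgroup.mem_inf]
    constructor
    · have h1 : t * s⁻¹ * t⁻¹ ∈ S := hSn.conj_mem _ (Subgroup.inv_mem _ hs) t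
      have heq : s * t * s⁻¹ * t⁻¹ = s * (t * s⁻¹ * t⁻¹) := by group
      rw [heq]
      exact Subgroup.mul_mem _ hs h1
    · have h1 : s * t * s⁻¹ ∈ T := hTn.conj_mem _ ht s
      exact Subgroup.mul_mem _ h1 (Subgroup.inv_mem _ ht)
  rw [hbot, Subgroup.mem_bot] at hc
  have heq : s * t = (s * t * s⁻¹ * t⁻¹) * (t * s) := by group
  rw [hc, one_mul] at heq
  exact heq

theorem chain_simple_bot_or_top {α : Type*} [Group α] [IsSimpleGroup α]
    {X Y : Subgroup α} {l : List (Subgroup α)}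
    (h : ChainFT SubStep X Y l) (hY : Y = ⊤) : X = ⊥ ∨ X = ⊤ := by
  induction h with
  | nil a => exact Or.inr hY
  | @cons A B C l hr h ih =>
      rcases ih hY with hB | hB
      · rw [hB] at hr
        exact Or.inl (le_bot_iff.1 hr.1)
      · subst hB
        have hA : A.Normal := ⟨fun a ha g => hr.2 g trivial a ha⟩
        exact hA.eq_bot_or_eq_top

theorem no_section_simple {α : Type*} [Group α] [IsSimpleGroup α]
    (hnc : ∃ a b : α, a * b ≠ b * a)
    {p : ℕ} (hp : p.Prime) {D₀ : Subgroup α} {l : List (Subgroup α)}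
    (hch : ChainFT SubStep D₀ ⊤ l)
    (h : ↥D₀ →* Multiplicative (ZMod p)) (hs : Function.Surjective h) : False := by
  obtain ⟨a, ha⟩ := zmod_exists_ne_one hp
  rcases chain_simple_bot_or_top hch rfl with hD | hD
  · subst hD
    obtain ⟨z, hz⟩ := hs a
    have hz1 : z = 1 := by
      have hzz : (z : α) ∈ (⊥ : Subgroup α) := z.2
      rw [Subgroup.mem_bot] at hzz
      exact Subtype.ext (by simp [hzz])
    rw [hz1, map_one] at hz
    exact ha hz.symm
  · subst hD
    set h' : α →* Multiplicative (ZMod p) :=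
      h.comp (Subgroup.topEquiv (G := α)).symm.toMonoidHom with hh'
    have hs' : Function.Surjective h' :=
      hs.comp (Subgroup.topEquiv (G := α)).symm.surjective
    rcases h'.normal_ker.eq_bot_or_eq_top with hk | hk
    · have hinj : Function.Injective h' := (MonoidHom.ker_eq_bot_iff h').1 hk
      obtain ⟨x, y, hxy⟩ := hnc
      exact hxy (hinj (by rw [map_mul, map_mul, mul_comm]))
    · obtain ⟨z, hz⟩ := hs' a
      have hz1 : h' z = 1 := by
        have : z ∈ h'.ker := by rw [hk]; trivial
        simpa [MonoidHom.mem_ker] using this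
      rw [hz1] at hz
      exact ha hz.symm

set_option maxHeartbeats 1000000 in
theorem semisimple_no_section :
    ∀ (m : ℕ) (N : Type) [instG : Group N] [instF : Finite N], Nat.card N ≤ m →
    ∀ (𝒮 : Set (Subgroup N)), (∀ S ∈ 𝒮, S.Normal) → (∀ S ∈ 𝒮, IsSimpleGroup ↥S) →
    (∀ S ∈ 𝒮, ¬IsMulCommutative ↥S) → sSup 𝒮 = ⊤ →
    ∀ (p : ℕ), p.Prime → ∀ (D : Subgroup N) (l : List (Subgroup N)),
      ChainFT SubStep D ⊤ l → ∀ (g : ↥D →* Multiplicative (ZMod p)),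
      Function.Surjective g → False := by
  intro m
  induction m with
  | zero =>
      intro N instG instF hcard
      have := Nat.card_pos (α := N)
      omega
  | succ m IH =>
      intro N instG instF hcard 𝒮 hnorm hsimp hnab hgen p hp D l hch g hgs
      by_cases hSex : ∃ S, S ∈ 𝒮
      case neg =>
        have h𝒮 : 𝒮 = ∅ := Set.eq_empty_iff_forall_notMem.2 fun S hS' => hSex ⟨S, hS'⟩
        rw [h𝒮, sSup_empty] at hgen
        obtain ⟨a, ha⟩ := zmod_exists_ne_one hp
        obtain ⟨z, hz⟩ := hgs a
        have hz1 : z = 1 := by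
          apply Subtype.ext
          have : (z : N) ∈ (⊥ : Subgroup N) := by
            have hD : D ≤ ⊥ := le_of_le_of_eq le_top hgen.symm
            exact hD z.2
          simpa [Subgroup.mem_bot] using this
        rw [hz1, map_one] at hz
        exact ha hz.symm
      case pos =>
        obtain ⟨S, hS𝒮⟩ := hSex
        haveI hSsimple : IsSimpleGroup ↥S := hsimp S hS𝒮
        have hSnormal : S.Normal := hnorm S hS𝒮
        have hSnc : ¬IsMulCommutative ↥S := hnab S hS𝒮
        set C : Subgroup N := Subgroup.centralizer (S : Set N) with hCdef
        have hCn : C.Normal := by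
          constructor
          intro c hc g₀
          rw [Subgroup.mem_centralizer_iff] at hc ⊢
          intro s hs
          have hs' : g₀⁻¹ * s * g₀ ∈ (S : Set N) := by
            have := hSnormal.conj_mem s hs g₀⁻¹
            simpa using this
          have hcs := hc _ hs'
          have heq : s * (g₀ * c * g₀⁻¹) = g₀ * ((g₀⁻¹ * s * g₀) * c) * g₀⁻¹ := by group
          rw [heq, hcs]
          group
        -- every other member of the family centralizes S
        have hTC : ∀ T ∈ 𝒮, T ≠ S → T ≤ C := by
          intro T hT hne t ht
          rw [Subgroup.mem_centralizer_iff]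
          intro s hs
          exact commute_of_simple_normal_ne hSnormal (hnorm T hT) hSsimple (hsimp T hT) hne t ht s hs
        have hsup : S ⊔ C = ⊤ := by
          rw [eq_top_iff, ← hgen]
          refine sSup_le fun T hT => ?_
          by_cases h : T = S
          · exact h ▸ le_sup_left
          · exact le_trans (hTC T hT h) le_sup_right
        have hSC : S ⊓ C = ⊥ := by
          have hSCn : (S ⊓ C).Normal := by
            constructor
            intro x hx g₀
            rw [Subgroup.mem_inf] at hx ⊢
            exact ⟨hSnormal.conj_mem _ hx.1 g₀, hCn.conj_mem _ hx.2 g₀⟩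
          rcases (hSCn.subgroupOf S).eq_bot_or_eq_top with h | h
          · rw [eq_bot_iff]
            intro x hx
            have hmem : (⟨x, hx.1⟩ : ↥S) ∈ (S ⊓ C).subgroupOf S := Subgroup.mem_subgroupOf.2 hx
            rw [h] at hmem
            simpa [Subtype.ext_iff] using hmem
          · exfalso
            apply hSnc
            rw [← Subgroup.le_centralizer_iff_isMulCommutative]
            intro s hs
            have hmem : (⟨s, hs⟩ : ↥S) ∈ (S ⊓ C).subgroupOf S := by rw [h]; trivial
            exact (Subgroup.mem_subgroupOf.1 hmem).2
        have hSbot : S ≠ ⊥ := by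
          intro h
          obtain ⟨⟨x, hx⟩, hx1⟩ := exists_ne (1 : ↥S)
          rw [h] at hx
          exact hx1 (Subtype.ext (by simpa [Subgroup.mem_bot] using hx))
        set J : Subgroup N := sSup (𝒮 \ {S}) with hJdef
        have hJC : J ≤ C := sSup_le fun T hT => hTC T hT.1 hT.2
        have hSJ : S ⊔ J = ⊤ := by
          rw [eq_top_iff, ← hgen]
          refine sSup_le fun T hT => ?_
          by_cases h : T = S
          · exact h ▸ le_sup_left
          · exact le_trans (le_sSup (Set.mem_diff_singleton.2 ⟨hT, h⟩)) le_sup_right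
        have hCJ : C = J := by
          refine le_antisymm ?_ hJC
          intro c hc
          have hcT : c ∈ S ⊔ J := hSJ ▸ Subgroup.mem_top c
          obtain ⟨s, hs, j, hj, hsj⟩ := (mem_normal_sup hSnormal).1 hcT
          have hsC : s = c * j⁻¹ := by rw [← hsj]; group
          have hsmem : s ∈ S ⊓ C :=
            ⟨hs, by rw [hsC]; exact Subgroup.mul_mem _ hc (Subgroup.inv_mem _ (hJC hj))⟩
          rw [hSC, Subgroup.mem_bot] at hsmem
          rw [hsmem, one_mul] at hsj
          exact hsj ▸ hj
        have hCtop : C ≠ ⊤ := by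
          intro h
          apply hSbot
          rw [← hSC, h, inf_top_eq]
        have hcardC : Nat.card ↥C ≤ m := by
          have h1 : Nat.card ↥C < Nat.card ↥(⊤ : Subgroup N) :=
            card_lt_of_lt (lt_of_le_of_ne le_top hCtop)
          rw [Subgroup.card_top] at h1
          omega
        -- the new generating family inside C
        set 𝒮' : Set (Subgroup ↥C) := (fun T => T.subgroupOf C) '' (𝒮 \ {S}) with h𝒮'
        have hnorm' : ∀ T' ∈ 𝒮', T'.Normal := by
          rintro _ ⟨T, hT, rfl⟩
          exact (hnorm T hT.1).subgroupOf C
        have hsimp' : ∀ T' ∈ 𝒮', IsSimpleGroup ↥T' := by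
          rintro _ ⟨T, hT, rfl⟩
          haveI := hsimp T hT.1
          exact simple_of_mulEquiv (Subgroup.subgroupOfEquivOfLe (hTC T hT.1 hT.2)).symm
        have hnab' : ∀ T' ∈ 𝒮', ¬IsMulCommutative ↥T' := by
          rintro _ ⟨T, hT, rfl⟩ hcomm
          exact hnab T hT.1 (isComm_down hcomm (hTC T hT.1 hT.2))
        have hgen' : sSup 𝒮' = ⊤ := by
          apply Subgroup.map_injective (Subgroup.subtype_injective C)
          rw [h𝒮', sSup_image]
          have hmap : (Subgroup.map C.subtype (⨆ T ∈ 𝒮 \ {S}, T.subgroupOf C)) =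
              ⨆ T ∈ 𝒮 \ {S}, Subgroup.map C.subtype (T.subgroupOf C) := by
            rw [Subgroup.map_iSup]
            refine iSup_congr fun T => ?_
            rw [Subgroup.map_iSup]
          rw [hmap]
          have heach : ∀ T ∈ 𝒮 \ {S}, Subgroup.map C.subtype (T.subgroupOf C) = T := by
            intro T hT
            rw [Subgroup.subgroupOf_map_subtype]
            exact inf_eq_left.2 (hTC T hT.1 hT.2)
          have h1 : (⨆ T ∈ 𝒮 \ {S}, Subgroup.map C.subtype (T.subgroupOf C)) = J := by
            rw [hJdef, sSup_eq_iSup]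
            exact iSup_congr fun T => iSup_congr fun hT => heach T hT
          rw [h1]
          have h2 : Subgroup.map C.subtype ⊤ = C := by
            rw [← MonoidHom.range_eq_map]
            exact Subgroup.range_subtype C
          rw [h2, hCJ]
        -- case split on the image of D ⊓ C
        set g' : ↥(D ⊓ C) →* Multiplicative (ZMod p) :=
          g.comp (Subgroup.inclusion (inf_le_left : D ⊓ C ≤ D)) with hg'
        rcases zmod_subgroup hp g'.range with hrange | hrange
        · -- image trivial: push the section into the simple quotient side S
          have hker' : ∀ (x : N) (hx : x ∈ D), x ∈ C → g ⟨x, hx⟩ = 1 := by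
            intro x hx hxC
            have hmem : g' ⟨x, ⟨hx, hxC⟩⟩ ∈ g'.range := ⟨⟨x, ⟨hx, hxC⟩⟩, rfl⟩
            rw [hrange, Subgroup.mem_bot] at hmem
            have : g' ⟨x, ⟨hx, hxC⟩⟩ = g ⟨x, hx⟩ := rfl
            rw [← this]
            exact hmem
          obtain ⟨h, hP⟩ := exists_transfer_hom (H := S) hCn g hker'
          have hhsurj : Function.Surjective h := by
            intro a
            obtain ⟨d, hd⟩ := hgs a
            have hdT : (d : N) ∈ S ⊔ C := hsup ▸ Subgroup.mem_top _
            obtain ⟨s, hs, c, hc, hsc⟩ := (mem_normal_sup hSnormal).1 hdT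
            have hzmem : (d : N) * c⁻¹ ∈ (D ⊔ C) ⊓ S := by
              rw [Subgroup.mem_inf]
              constructor
              · exact Subgroup.mul_mem _ (Subgroup.mem_sup_left d.2)
                  (Subgroup.mem_sup_right (Subgroup.inv_mem _ hc))
              · have : (d : N) * c⁻¹ = s := by rw [← hsc]; group
                rw [this]; exact hs
            refine ⟨⟨(d : N) * c⁻¹, hzmem⟩, ?_⟩
            have hPz := hP ⟨(d : N) * c⁻¹, hzmem⟩ (d : N) d.2
              (by
                have : (d : N)⁻¹ * ((d : N) * c⁻¹) = c⁻¹ := by group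
                rw [this]
                exact Subgroup.inv_mem _ hc)
            rw [hPz]
            have : (⟨(d : N), d.2⟩ : ↥D) = d := rfl
            rw [this, hd]
          -- transfer the chain into the simple group S
          have hchS : ChainFT SubStep (((D ⊔ C) ⊓ S).subgroupOf S) ⊤
              (l.map (fun X => ((X ⊔ C) ⊓ S).subgroupOf S)) := by
            have := hch.map (fun X => ((X ⊔ C) ⊓ S).subgroupOf S)
              (fun X Y hXY => substep_subgroupOf (substep_supinf hCn hXY))
            refine this.congr_right ?_
            show (((⊤ : Subgroup N) ⊔ C) ⊓ S).subgroupOf S = ⊤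
            simp [Subgroup.subgroupOf_self]
          set e := Subgroup.subgroupOfEquivOfLe (inf_le_right : (D ⊔ C) ⊓ S ≤ S) with he
          have hfinal : Function.Surjective (h.comp e.toMonoidHom) :=
            hhsurj.comp e.surjective
          exact no_section_simple (noncomm_exists hSnc) hp hchS (h.comp e.toMonoidHom) hfinal
        · -- image full: recurse into the centralizer C
          have hsurj' : Function.Surjective g' := by
            intro a
            have : a ∈ g'.range := hrange ▸ Subgroup.mem_top a
            exact this
          have hchC : ChainFT SubStep ((D ⊓ C).subgroupOf C) ⊤
              (l.map (fun X => (X ⊓ C).subgroupOf C)) := by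
            have := hch.map (fun X => (X ⊓ C).subgroupOf C)
              (fun X Y hXY => substep_subgroupOf (substep_inf hXY))
            refine this.congr_right ?_
            show ((⊤ ⊓ C : Subgroup N)).subgroupOf C = ⊤
            simp [Subgroup.subgroupOf_self]
          set e := Subgroup.subgroupOfEquivOfLe (inf_le_right : D ⊓ C ≤ C) with he
          exact IH ↥C hcardC 𝒮' hnorm' hsimp' hnab' hgen' p hp
            ((D ⊓ C).subgroupOf C) _ hchC (g'.comp e.toMonoidHom)
            (hsurj'.comp e.surjective)

-- ## Part 5 : misc group lemmas

theorem centralizer_of_inf_bot {A B : Subgroup G} (hA : A.Normal) (hB : B.Normal)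
    (h : A ⊓ B = ⊥) : B ≤ Subgroup.centralizer (A : Set G) := by
  intro b hb
  rw [Subgroup.mem_centralizer_iff]
  intro a ha
  have hc : a * b * a⁻¹ * b⁻¹ ∈ A ⊓ B := by
    rw [Subgroup.mem_inf]
    constructor
    · have h1 : b * a⁻¹ * b⁻¹ ∈ A := hA.conj_mem _ (Subgroup.inv_mem _ ha) b
      have heq : a * b * a⁻¹ * b⁻¹ = a * (b * a⁻¹ * b⁻¹) := by group
      rw [heq]
      exact Subgroup.mul_mem _ ha h1
    · have h1 : a * b * a⁻¹ ∈ B := hB.conj_mem _ hb a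
      exact Subgroup.mul_mem _ h1 (Subgroup.inv_mem _ hb)
  rw [h, Subgroup.mem_bot] at hc
  have heq : a * b = (a * b * a⁻¹ * b⁻¹) * (b * a) := by group
  rw [hc, one_mul] at heq
  exact heq

/-- Transport of `HasCyclicCompFactor` along a group isomorphism. -/
theorem hasCyclic_of_mulEquiv {G₁ G₂ : Type*} [Group G₁] [Group G₂] (e : G₁ ≃* G₂) {p : ℕ}
    (h : HasCyclicCompFactor G₁ p) : HasCyclicCompFactor G₂ p := by
  obtain ⟨n, c, ⟨hc0, hcl, hcs⟩, i, f, hfs, hker⟩ := h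
  have hmem : ∀ (A : Subgroup G₁) (x : G₂), x ∈ Subgroup.map e.toMonoidHom A ↔ e.symm x ∈ A :=
    fun A x => Subgroup.mem_map_equiv
  have hlt : ∀ (A B : Subgroup G₁), A < B →
      Subgroup.map e.toMonoidHom A < Subgroup.map e.toMonoidHom B := by
    intro A B hAB
    refine lt_of_le_of_ne ((Subgroup.map_le_map_iff_of_injective e.injective).2 hAB.le) ?_
    intro hEq
    exact hAB.ne (Subgroup.map_injective e.injective hEq)
  set c' : Fin (n+1) → Subgroup G₂ := fun j => Subgroup.map e.toMonoidHom (c j) with hc'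
  refine ⟨n, c', ⟨?_, ?_, ?_⟩, i, ?_⟩
  · simp only [hc']
    rw [hc0]; exact Subgroup.map_bot _
  · simp only [hc']
    rw [hcl, ← MonoidHom.range_eq_map]
    exact MonoidHom.range_eq_top_of_surjective _ e.surjective
  · intro j
    simp only [hc']
    obtain ⟨h1, h2, h3⟩ := hcs j
    have h2' := forall_of_subgroupOf_normal h1.le h2
    refine ⟨hlt _ _ h1, ?_, ?_⟩
    · apply subgroupOf_normal_of_forall
      intro b hb a ha
      rw [hmem] at hb ha ⊢
      have heq : e.symm (b * a * b⁻¹) = e.symm b * e.symm a * (e.symm b)⁻¹ := by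
        simp [map_mul]
      rw [heq]
      exact h2' _ hb _ ha
    · intro K hK1 hK2 hK3
      set K' := Subgroup.comap e.toMonoidHom K with hK'
      have hmapK' : Subgroup.map e.toMonoidHom K' = K :=
        Subgroup.map_comap_eq_self_of_surjective e.surjective K
      have h1' : c j.castSucc < K' := by
        refine lt_of_le_of_ne ?_ ?_
        · intro x hx
          show e x ∈ K
          have : e x ∈ Subgroup.map e.toMonoidHom (c j.castSucc) := ⟨x, hx, rfl⟩
          exact hK1.le this
        · intro hEq
          exact hK1.ne (by rw [hEq, hmapK'])
      have h2' : K' ≤ c j.succ := by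
        intro x hx
        have : e x ∈ Subgroup.map e.toMonoidHom (c j.succ) := hK2 hx
        rw [hmem] at this
        simpa using this
      have h3' : (K'.subgroupOf (c j.succ)).Normal := by
        apply subgroupOf_normal_of_forall
        intro b hb a ha
        have hKle : K ≤ Subgroup.map e.toMonoidHom (c j.succ) := hK2
        have hforall := forall_of_subgroupOf_normal hKle hK3
        have hbm : e b ∈ Subgroup.map e.toMonoidHom (c j.succ) := ⟨b, hb, rfl⟩
        have ham : e a ∈ K := ha
        have hres := hforall _ hbm _ ham
        show e (b * a * b⁻¹) ∈ K
        simpa [map_mul] using hres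
      have := h3 K' h1' h2' h3'
      rw [← hmapK', this]
  · set φ := ((c i.succ).equivMapOfInjective e.toMonoidHom e.injective).symm with hφ
    have hcoe : ∀ z : ↥(Subgroup.map e.toMonoidHom (c i.succ)),
        ((φ z : ↥(c i.succ)) : G₁) = e.symm (z : G₂) := by
      intro z
      apply e.injective
      have h1 : (((φ.symm (φ z)) : ↥(Subgroup.map e.toMonoidHom (c i.succ))) : G₂)
          = e ((φ z : ↥(c i.succ)) : G₁) :=
        Subgroup.coe_equivMapOfInjective_apply (c i.succ) e.toMonoidHom
          (by exact e.injective) (φ z)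
      rw [φ.symm_apply_apply] at h1
      rw [← h1]
      simp
    refine ⟨f.comp φ.toMonoidHom, hfs.comp φ.surjective, ?_⟩
    ext z
    simp only [hc']
    rw [MonoidHom.mem_ker, MonoidHom.comp_apply, ← MonoidHom.mem_ker, hker,
      Subgroup.mem_subgroupOf, Subgroup.mem_subgroupOf, hmem]
    exact iff_of_eq (congrArg (· ∈ c i.castSucc) (hcoe z))

-- ## Part 6 : chief factor decomposition

theorem isComm_elements {T : Subgroup G} (h : IsMulCommutative ↥T) :
    ∀ x ∈ T, ∀ y ∈ T, x * y = y * x := by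
  intro x hx y hy
  have := h.is_comm.comm ⟨x, hx⟩ ⟨y, hy⟩
  simpa [Subtype.ext_iff] using this

theorem ne_bot_exists {T : Subgroup G} (h : T ≠ ⊥) : ∃ x ∈ T, x ≠ 1 := by
  by_contra hc
  push_neg at hc
  exact h ((Subgroup.eq_bot_iff_forall T).2 hc)

set_option maxHeartbeats 1600000 in
theorem chief_decomp {G : Type*} [Group G] [Finite G] (A : Subgroup G) (hA : A.Normal)
    (hAbot : A ≠ ⊥) (hmin : ∀ K : Subgroup G, K.Normal → K ≠ ⊥ → K ≤ A → K = A)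
    (hnc : ¬IsMulCommutative ↥A) :
    ∃ 𝒮 : Set (Subgroup ↥A), (∀ S ∈ 𝒮, S.Normal) ∧ (∀ S ∈ 𝒮, IsSimpleGroup ↥S) ∧
      (∀ S ∈ 𝒮, ¬IsMulCommutative ↥S) ∧ sSup 𝒮 = ⊤ := by
  classical
  set 𝒯 : Set (Subgroup G) :=
    {T | T ≤ A ∧ T ≠ ⊥ ∧ ∀ a ∈ A, ∀ t ∈ T, a * t * a⁻¹ ∈ T} with h𝒯
  have hA𝒯 : A ∈ 𝒯 := ⟨le_rfl, hAbot, fun a ha t ht =>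
    Subgroup.mul_mem _ (Subgroup.mul_mem _ ha ht) (Subgroup.inv_mem _ ha)⟩
  obtain ⟨S₀, hS₀𝒯, hS₀max⟩ := Set.Finite.exists_minimalFor
    (fun T : Subgroup G => Nat.card ↥T) 𝒯 (Set.toFinite _) ⟨A, hA𝒯⟩
  have hS₀min : ∀ T ∈ 𝒯, T ≤ S₀ → T = S₀ := by
    intro T hT hle
    refine eq_of_le_of_card_le hle ?_
    have := hS₀max hT (Subgroup.card_le_of_le hle)
    omega
  -- conjugates of S₀
  set cg : G → Subgroup G := fun g => Subgroup.map (MulAut.conj g).toMonoidHom S₀ with hcg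
  have hcg_mem : ∀ (g x : G), x ∈ cg g ↔ ∃ t ∈ S₀, g * t * g⁻¹ = x := by
    intro g x
    simp [hcg, Subgroup.mem_map, MulAut.conj_apply]
  have hcg𝒯 : ∀ g, cg g ∈ 𝒯 := by
    intro g
    refine ⟨?_, ?_, ?_⟩
    · intro x hx
      obtain ⟨t, ht, rfl⟩ := (hcg_mem g x).1 hx
      exact hA.conj_mem t (hS₀𝒯.1 ht) g
    · intro hbot
      apply hS₀𝒯.2.1
      rw [Subgroup.eq_bot_iff_forall]
      intro t ht
      have : g * t * g⁻¹ ∈ cg g := (hcg_mem g _).2 ⟨t, ht, rfl⟩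
      rw [hbot, Subgroup.mem_bot] at this
      have heq : t = g⁻¹ * (g * t * g⁻¹) * g := by group
      rw [heq, this]
      group
    · intro a ha x hx
      obtain ⟨t, ht, rfl⟩ := (hcg_mem g x).1 hx
      have haA : g⁻¹ * a * g ∈ A := by
        have := hA.conj_mem a ha g⁻¹
        simpa using this
      have ht' : (g⁻¹ * a * g) * t * (g⁻¹ * a * g)⁻¹ ∈ S₀ := hS₀𝒯.2.2 _ haA t ht
      refine (hcg_mem g _).2 ⟨_, ht', ?_⟩
      group
  have hcgcard : ∀ g, Nat.card ↥(cg g) = Nat.card ↥S₀ := by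
    intro g
    exact (Nat.card_congr (S₀.equivMapOfInjective (MulAut.conj g).toMonoidHom
      (by exact (MulAut.conj g).injective)).toEquiv).symm
  have hcgmin : ∀ g, ∀ T ∈ 𝒯, T ≤ cg g → T = cg g := by
    intro g T hT hle
    refine eq_of_le_of_card_le hle ?_
    have h1 := Subgroup.card_le_of_le hle
    rw [hcgcard g] at h1 ⊢
    have := hS₀max hT h1
    omega
  set K : Subgroup G := ⨆ g : G, cg g with hK
  have hS₀K : S₀ ≤ K := by
    intro t ht
    have : t ∈ cg 1 := (hcg_mem 1 t).2 ⟨t, ht, by group⟩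
    exact le_iSup cg 1 this
  have hKA : K = A := by
    apply hmin
    · constructor
      intro x hx h
      revert h
      refine Subgroup.iSup_induction cg hx (C := fun x => ∀ h : G, h * x * h⁻¹ ∈ K) ?_ ?_ ?_
      · intro g x hx h
        obtain ⟨t, ht, rfl⟩ := (hcg_mem g x).1 hx
        have : (h * g) * t * (h * g)⁻¹ ∈ cg (h * g) := (hcg_mem _ _).2 ⟨t, ht, rfl⟩
        have heq : h * (g * t * g⁻¹) * h⁻¹ = (h * g) * t * (h * g)⁻¹ := by group
        rw [heq]
        exact le_iSup cg (h * g) this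
      · intro h
        simpa using Subgroup.one_mem K
      · intro x y hx hy h
        have heq : h * (x * y) * h⁻¹ = (h * x * h⁻¹) * (h * y * h⁻¹) := by group
        rw [heq]
        exact Subgroup.mul_mem _ (hx h) (hy h)
    · intro h
      apply hS₀𝒯.2.1
      rw [eq_bot_iff]
      exact le_trans hS₀K (le_of_eq h)
    · exact iSup_le fun g => (hcg𝒯 g).1
  -- distinct conjugates commute
  have hpair : ∀ g g', cg g = cg g' ∨ ∀ x ∈ cg g, ∀ y ∈ cg g', x * y = y * x := by
    intro g g'
    by_cases heq : cg g = cg g'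
    · exact Or.inl heq
    right
    have hU : cg g ⊓ cg g' = ⊥ := by
      by_contra hUbot
      have hU𝒯 : cg g ⊓ cg g' ∈ 𝒯 := by
        refine ⟨le_trans inf_le_left (hcg𝒯 g).1, hUbot, ?_⟩
        intro a ha t ht
        rw [Subgroup.mem_inf] at ht ⊢
        exact ⟨(hcg𝒯 g).2.2 a ha t ht.1, (hcg𝒯 g').2.2 a ha t ht.2⟩
      have h1 := hcgmin g _ hU𝒯 inf_le_left
      have h2 := hcgmin g' _ hU𝒯 inf_le_right
      exact heq (h1 ▸ h2)
    intro x hx y hy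
    have hxA : x ∈ A := (hcg𝒯 g).1 hx
    have hyA : y ∈ A := (hcg𝒯 g').1 hy
    have hc : x * y * x⁻¹ * y⁻¹ ∈ cg g ⊓ cg g' := by
      rw [Subgroup.mem_inf]
      constructor
      · have h1 : y * x⁻¹ * y⁻¹ ∈ cg g := (hcg𝒯 g).2.2 y hyA x⁻¹ (Subgroup.inv_mem _ hx)
        have heq2 : x * y * x⁻¹ * y⁻¹ = x * (y * x⁻¹ * y⁻¹) := by group
        rw [heq2]
        exact Subgroup.mul_mem _ hx h1
      · have h1 : x * y * x⁻¹ ∈ cg g' := (hcg𝒯 g').2.2 x hxA y hy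
        exact Subgroup.mul_mem _ h1 (Subgroup.inv_mem _ hy)
    rw [hU, Subgroup.mem_bot] at hc
    have heq2 : x * y = (x * y * x⁻¹ * y⁻¹) * (y * x) := by group
    rw [hc, one_mul] at heq2
    exact heq2
  -- each conjugate is non-commutative
  have hcgnc : ∀ g, ∃ x ∈ cg g, ∃ y ∈ cg g, x * y ≠ y * x := by
    intro g₀
    by_contra hcon
    push_neg at hcon
    have hcent : ∀ t ∈ cg g₀, t ∈ Subgroup.centralizer (A : Set G) := by
      intro t ht
      rw [Subgroup.mem_centralizer_iff]
      intro a ha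
      have haK : a ∈ K := hKA.symm ▸ ha
      refine Subgroup.iSup_induction cg haK (C := fun a => a * t = t * a) ?_ ?_ ?_
      · intro g x hx
        rcases hpair g g₀ with hEq | hComm
        · exact hcon x (hEq ▸ hx) t ht
        · exact hComm x hx t ht
      · simp
      · intro x y hx hy
        calc (x * y) * t = x * (y * t) := by group
        _ = x * (t * y) := by rw [hy]
        _ = (x * t) * y := by group
        _ = (t * x) * y := by rw [hx]
        _ = t * (x * y) := by group
    set ZA : Subgroup G := A ⊓ Subgroup.centralizer (A : Set G) with hZA
    have hZAnormal : ZA.Normal := by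
      constructor
      intro z hz h
      rw [Subgroup.mem_inf] at hz ⊢
      refine ⟨hA.conj_mem _ hz.1 h, ?_⟩
      rw [Subgroup.mem_centralizer_iff]
      intro a ha
      have ha' : h⁻¹ * a * h ∈ A := by
        have := hA.conj_mem a ha h⁻¹
        simpa using this
      have := (Subgroup.mem_centralizer_iff.1 hz.2) _ ha'
      have heq : a * (h * z * h⁻¹) = h * ((h⁻¹ * a * h) * z) * h⁻¹ := by group
      rw [heq, this]
      group
    have hZAbot : ZA ≠ ⊥ := by
      obtain ⟨t, ht, ht1⟩ := ne_bot_exists (hcg𝒯 g₀).2.1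
      intro h
      apply ht1
      have : t ∈ ZA := ⟨(hcg𝒯 g₀).1 ht, hcent t ht⟩
      rw [h, Subgroup.mem_bot] at this
      exact this
    have hZAA : ZA = A := hmin ZA hZAnormal hZAbot inf_le_left
    apply hnc
    rw [← Subgroup.le_centralizer_iff_isMulCommutative]
    intro a ha
    have : a ∈ ZA := hZAA.symm ▸ ha
    exact this.2
  -- each conjugate is simple
  have hcgsimple : ∀ g, IsSimpleGroup ↥(cg g) := by
    intro g₀
    set T : Subgroup G := cg g₀ with hT
    obtain ⟨t, ht, ht1⟩ := ne_bot_exists (hcg𝒯 g₀).2.1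
    haveI : Nontrivial ↥T := ⟨⟨⟨t, ht⟩, 1, by simp [Subtype.ext_iff, ht1]⟩⟩
    constructor
    intro R hR
    set R' : Subgroup G := Subgroup.map T.subtype R with hR'
    have hR'T : R' ≤ T := Subgroup.map_subtype_le R
    by_cases hR'bot : R' = ⊥
    · left
      apply Subgroup.map_injective (Subgroup.subtype_injective T)
      rw [← hR', hR'bot, Subgroup.map_bot]
    · right
      have hnormA : ∀ a ∈ A, ∀ r ∈ R', a * r * a⁻¹ ∈ R' := by
        intro a ha
        have haK : a ∈ K := hKA.symm ▸ ha
        refine Subgroup.iSup_induction cg haK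
          (C := fun a => ∀ r ∈ R', a * r * a⁻¹ ∈ R') ?_ ?_ ?_
        · intro g x hx r hr
          rcases hpair g g₀ with hEq | hComm
          · have hxT : x ∈ T := by rw [hT, ← hEq]; exact hx
            obtain ⟨ρ, hρ, rfl⟩ := hr
            have hmem : (⟨x, hxT⟩ : ↥T) * ρ * (⟨x, hxT⟩ : ↥T)⁻¹ ∈ R := hR.conj_mem ρ hρ _
            refine ⟨_, hmem, ?_⟩
            simp
          · have hrT : r ∈ T := hR'T hr
            have h1 : x * r = r * x := hComm x hx r hrT
            have h2 : x * r * x⁻¹ = r := by rw [h1]; group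
            rw [h2]
            exact hr
        · intro r hr
          simpa using hr
        · intro x y hx hy r hr
          have heq : (x * y) * r * (x * y)⁻¹ = x * (y * r * y⁻¹) * x⁻¹ := by group
          rw [heq]
          exact hx _ (hy r hr)
      have hR'𝒯 : R' ∈ 𝒯 := ⟨le_trans hR'T (hcg𝒯 g₀).1, hR'bot, hnormA⟩
      have hR'eq : R' = T := hcgmin g₀ R' hR'𝒯 hR'T
      apply Subgroup.map_injective (Subgroup.subtype_injective T)
      rw [← hR', hR'eq, ← MonoidHom.range_eq_map, Subgroup.range_subtype]
  -- assemble the family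
  refine ⟨Set.range (fun g => (cg g).subgroupOf A), ?_, ?_, ?_, ?_⟩
  · rintro _ ⟨g, rfl⟩
    exact subgroupOf_normal_of_forall (hcg𝒯 g).2.2
  · rintro _ ⟨g, rfl⟩
    haveI := hcgsimple g
    exact simple_of_mulEquiv (Subgroup.subgroupOfEquivOfLe (hcg𝒯 g).1).symm
  · rintro _ ⟨g, rfl⟩ hcomm
    obtain ⟨x, hx, y, hy, hxy⟩ := hcgnc g
    exact hxy (isComm_elements (isComm_down hcomm (hcg𝒯 g).1) x hx y hy)
  · apply Subgroup.map_injective (Subgroup.subtype_injective A)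
    rw [sSup_range, Subgroup.map_iSup]
    have heach : ∀ g, Subgroup.map A.subtype ((cg g).subgroupOf A) = cg g := by
      intro g
      rw [Subgroup.subgroupOf_map_subtype]
      exact inf_eq_left.2 (hcg𝒯 g).1
    have h1 : (⨆ g, Subgroup.map A.subtype ((cg g).subgroupOf A)) = ⨆ g, cg g :=
      iSup_congr heach
    rw [h1, ← hK, hKA, ← MonoidHom.range_eq_map, Subgroup.range_subtype]

-- ## Part 7 : existence of a non-abelian minimal normal subgroup

theorem exists_minimal_normal_noncomm {G : Type*} [Group G]
    (hsocle : ¬ IsMulCommutative ↥(socle G)) :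
    ∃ A : Subgroup G, A.Normal ∧ A ≠ ⊥ ∧
      (∀ K : Subgroup G, K.Normal → K ≠ ⊥ → K ≤ A → K = A) ∧ ¬IsMulCommutative ↥A := by
  by_contra hcon
  push_neg at hcon
  apply hsocle
  set M : Set (Subgroup G) := {N | N.Normal ∧ N ≠ ⊥ ∧
    ∀ K : Subgroup G, K.Normal → K ≠ ⊥ → K ≤ N → K = N} with hM
  have hsoc : socle G = ⨆ N ∈ M, N := rfl
  have hABcomm : ∀ A ∈ M, ∀ B ∈ M, B ≤ Subgroup.centralizer (A : Set G) := by
    intro A hA B hB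
    by_cases h : B = A
    · subst h
      exact Subgroup.le_centralizer_iff_isMulCommutative.2 (hcon B hB.1 hB.2.1 hB.2.2)
    · refine centralizer_of_inf_bot hA.1 hB.1 ?_
      by_contra hbot
      have hABn : (A ⊓ B).Normal := by
        constructor
        intro x hx g
        rw [Subgroup.mem_inf] at hx ⊢
        exact ⟨hA.1.conj_mem _ hx.1 g, hB.1.conj_mem _ hx.2 g⟩
      have h1 := hA.2.2 _ hABn hbot inf_le_left
      have h2 := hB.2.2 _ hABn hbot inf_le_right
      exact h (h2.symm.trans h1)
  rw [← Subgroup.le_centralizer_iff_isMulCommutative]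
  conv_lhs => rw [hsoc]
  refine iSup₂_le fun A hA => ?_
  rw [Subgroup.le_centralizer_iff]
  conv_lhs => rw [hsoc]
  exact iSup₂_le fun B hB => hABcomm A hA B hB

-- ## Part 8 : a nontrivial normal subgroup of a primitive group is transitive

theorem transitive_of_normal {Δ : Type*} (P : Subgroup (Equiv.Perm Δ))
    (hprim : IsPrimitivePermGroup P) (A : Subgroup ↥P) (hA : A.Normal) (hAbot : A ≠ ⊥) :
    ∀ a b : Δ, ∃ ν : ↥P, ν ∈ A ∧ (↑ν : Equiv.Perm Δ) a = b := by
  classical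
  set Orb : Δ → Set Δ := fun x => {z | ∃ ν : ↥P, ν ∈ A ∧ (↑ν : Equiv.Perm Δ) x = z} with hOrb
  have hself : ∀ x, x ∈ Orb x := fun x => ⟨1, A.one_mem, rfl⟩
  have htrans2 : ∀ x z, z ∈ Orb x → Orb z = Orb x := by
    rintro x z ⟨ν, hν, hνx⟩
    ext w
    constructor
    · rintro ⟨μ, hμ, hμz⟩
      refine ⟨μ * ν, Subgroup.mul_mem _ hμ hν, ?_⟩
      have : ((μ * ν : ↥P) : Equiv.Perm Δ) x = (↑μ : Equiv.Perm Δ) ((↑ν : Equiv.Perm Δ) x) := rfl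
      rw [this, hνx, hμz]
    · rintro ⟨μ, hμ, hμx⟩
      refine ⟨μ * ν⁻¹, Subgroup.mul_mem _ hμ (Subgroup.inv_mem _ hν), ?_⟩
      have h1 : ((μ * ν⁻¹ : ↥P) : Equiv.Perm Δ) z
          = (↑μ : Equiv.Perm Δ) ((↑ν : Equiv.Perm Δ)⁻¹ z) := rfl
      have h2 : (↑ν : Equiv.Perm Δ)⁻¹ z = x := by
        rw [← hνx]
        simp
      rw [h1, h2, hμx]
  have hblock : ∀ x, IsBlockOf P (Orb x) := by
    intro x g hg
    have himg : g '' Orb x = Orb (g x) := by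
      ext w
      simp only [Set.mem_image]
      constructor
      · rintro ⟨z, ⟨ν, hν, hνx⟩, rfl⟩
        refine ⟨⟨g, hg⟩ * ν * (⟨g, hg⟩ : ↥P)⁻¹, hA.conj_mem ν hν ⟨g, hg⟩, ?_⟩
        have : ((⟨g, hg⟩ * ν * (⟨g, hg⟩ : ↥P)⁻¹ : ↥P) : Equiv.Perm Δ) (g x)
            = g ((↑ν : Equiv.Perm Δ) (g⁻¹ (g x))) := rfl
        rw [this]
        simp [hνx]
      · rintro ⟨ν, hν, hνgx⟩
        set gP : ↥P := ⟨g, hg⟩ with hgP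
        set μ : ↥P := gP⁻¹ * ν * gP with hμdef
        have hμA : μ ∈ A := by
          have hcm := hA.conj_mem ν hν gP⁻¹
          have heq : gP⁻¹ * ν * (gP⁻¹)⁻¹ = μ := by rw [hμdef]; group
          rw [← heq]
          exact hcm
        refine ⟨(↑μ : Equiv.Perm Δ) x, ⟨μ, hμA, rfl⟩, ?_⟩
        have h1 : (↑μ : Equiv.Perm Δ) x = g⁻¹ ((↑ν : Equiv.Perm Δ) (g x)) := rfl
        rw [h1]
        simp [hνgx]
    by_cases hdis : (Orb (g x) ∩ Orb x).Nonempty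
    · left
      rw [himg]
      obtain ⟨w, hw1, hw2⟩ := hdis
      exact (htrans2 _ _ hw1).symm.trans (htrans2 _ _ hw2)
    · right
      rw [himg, Set.disjoint_iff_inter_eq_empty]
      exact Set.not_nonempty_iff_eq_empty.1 hdis
  have hmove : ∃ x, ¬ (Orb x).Subsingleton := by
    by_contra hall
    push_neg at hall
    apply hAbot
    rw [Subgroup.eq_bot_iff_forall]
    intro ν hν
    have hfix : ∀ x : Δ, (↑ν : Equiv.Perm Δ) x = x := by
      intro x
      exact hall x ⟨ν, hν, rfl⟩ (hself x)
    apply Subtype.ext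
    exact Equiv.ext hfix
  obtain ⟨x, hx⟩ := hmove
  rcases hprim.2 (Orb x) (hblock x) with h | h
  · exact absurd h hx
  intro a b
  have ha : a ∈ Orb x := h ▸ Set.mem_univ a
  have hb : b ∈ Orb x := h ▸ Set.mem_univ b
  obtain ⟨ν₁, hν₁, hν₁x⟩ := ha
  obtain ⟨ν₂, hν₂, hν₂x⟩ := hb
  refine ⟨ν₂ * ν₁⁻¹, Subgroup.mul_mem _ hν₂ (Subgroup.inv_mem _ hν₁), ?_⟩
  have h1 : ((ν₂ * ν₁⁻¹ : ↥P) : Equiv.Perm Δ) a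
      = (↑ν₂ : Equiv.Perm Δ) ((↑ν₁ : Equiv.Perm Δ)⁻¹ a) := rfl
  have h2 : (↑ν₁ : Equiv.Perm Δ)⁻¹ a = x := by
    rw [← hν₁x]
    simp
  rw [h1, h2, hν₂x]

/-- Build a subnormal chain from a composition chain, starting at `c i.succ`. -/
theorem chain_of_compositionChain {n : ℕ} {c : Fin (n+1) → Subgroup G}
    (hc : IsCompositionChain c) (i : Fin n) :
    ∃ l, ChainFT SubStep (c i.succ) ⊤ l := by
  have key : ∀ k, k ≤ n → ∃ l, ChainFT SubStep (c ⟨n - k, by omega⟩) (c (Fin.last n)) l := by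
    intro k
    induction k with
    | zero =>
        intro _
        have he : (⟨n - 0, by omega⟩ : Fin (n+1)) = Fin.last n := by
          apply Fin.ext; simp [Fin.last]
        rw [he]
        exact ⟨_, ChainFT.nil _⟩
    | succ k ih =>
        intro hk
        obtain ⟨l, hl⟩ := ih (by omega)
        set i' : Fin n := ⟨n - (k+1), by omega⟩ with hi'
        obtain ⟨h1, h2, _⟩ := hc.2.2 i'
        have hsub : SubStep (c i'.castSucc) (c i'.succ) := substep_of_normal h1.le h2
        have e1 : i'.castSucc = (⟨n - (k+1), by omega⟩ : Fin (n+1)) := by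
          apply Fin.ext; simp [hi']
        have e2 : i'.succ = (⟨n - k, by omega⟩ : Fin (n+1)) := by
          apply Fin.ext; simp [hi']; omega
        rw [e1, e2] at hsub
        exact ⟨_, ChainFT.cons hsub hl⟩
  have hile : (i : ℕ) + 1 ≤ n := i.2
  obtain ⟨l, hl⟩ := key (n - ((i : ℕ) + 1)) (by omega)
  have he : (⟨n - (n - ((i : ℕ) + 1)), by omega⟩ : Fin (n+1)) = i.succ := by
    apply Fin.ext; simp [Fin.val_succ]; omega
  rw [he] at hl
  exact ⟨l, hl.congr_right hc.2.1⟩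

set_option maxHeartbeats 1600000 in
theorem main_section_transfer {Δ : Type} [Fintype Δ] (P : Subgroup (Equiv.Perm Δ))
    (hprim : IsPrimitivePermGroup P) (A : Subgroup ↥P) (hAn : A.Normal) (hAbot : A ≠ ⊥)
    (𝒮 : Set (Subgroup ↥A)) (h𝒮n : ∀ S ∈ 𝒮, S.Normal) (h𝒮s : ∀ S ∈ 𝒮, IsSimpleGroup ↥S)
    (h𝒮nc : ∀ S ∈ 𝒮, ¬IsMulCommutative ↥S) (h𝒮gen : sSup 𝒮 = ⊤) (y : Δ)
    {p : ℕ} (hp : p.Prime) (D K : Subgroup ↥P) (hKD : K ≤ D) (l : List (Subgroup ↥P))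
    (hch : ChainFT SubStep D ⊤ l) (f : ↥D →* Multiplicative (ZMod p))
    (hfs : Function.Surjective f) (hker : f.ker = K.subgroupOf D) :
    HasCyclicCompFactor ↥(P ⊓ MulAction.stabilizer (Equiv.Perm Δ) y) p := by
  classical
  set f' := f.comp (Subgroup.inclusion (inf_le_left : D ⊓ A ≤ D)) with hf'
  rcases zmod_subgroup hp f'.range with hrange | hrange
  · -- trivial image on D ⊓ A : transfer the section into the point stabiliser
    set Q : Subgroup (Equiv.Perm Δ) := P ⊓ MulAction.stabilizer (Equiv.Perm Δ) y with hQ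
    set Hy : Subgroup ↥P := Q.subgroupOf P with hHy
    have hker' : ∀ (x : ↥P) (hx : x ∈ D), x ∈ A → f ⟨x, hx⟩ = 1 := by
      intro x hx hxA
      have hmem : f' ⟨x, ⟨hx, hxA⟩⟩ ∈ f'.range := ⟨_, rfl⟩
      rw [hrange, Subgroup.mem_bot] at hmem
      exact hmem
    obtain ⟨h, hP⟩ := exists_transfer_hom (H := Hy) hAn f hker'
    have htrans := transitive_of_normal P hprim A hAn hAbot
    have hhsurj : Function.Surjective h := by
      intro a
      obtain ⟨d, hd⟩ := hfs a
      obtain ⟨ν, hν, hνy⟩ := htrans y (((d : ↥P) : Equiv.Perm Δ)⁻¹ y)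
      have hzHy : (d : ↥P) * ν ∈ Hy := by
        rw [hHy, Subgroup.mem_subgroupOf]
        refine Subgroup.mem_inf.2 ⟨((d : ↥P) * ν).2, ?_⟩
        rw [MulAction.mem_stabilizer_iff, Equiv.Perm.smul_def]
        have h1 : (((d : ↥P) * ν : ↥P) : Equiv.Perm Δ) y
            = ((d : ↥P) : Equiv.Perm Δ) (((ν : ↥P) : Equiv.Perm Δ) y) := rfl
        rw [h1, hνy]
        simp
      have hzmem : (d : ↥P) * ν ∈ (D ⊔ A) ⊓ Hy :=
        Subgroup.mem_inf.2 ⟨Subgroup.mul_mem_sup d.2 hν, hzHy⟩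
      refine ⟨⟨(d : ↥P) * ν, hzmem⟩, ?_⟩
      have hPz := hP ⟨(d : ↥P) * ν, hzmem⟩ (d : ↥P) d.2 (by
        show ((d : ↥P))⁻¹ * ((d : ↥P) * ν) ∈ A
        have heq : ((d : ↥P))⁻¹ * ((d : ↥P) * ν) = ν := by group
        rw [heq]
        exact hν)
      rw [hPz]
      have heta : (⟨((d : ↥P) : ↥P), d.2⟩ : ↥D) = d := rfl
      rw [heta]
      exact hd
    have hKstle : (K ⊔ A) ⊓ Hy ≤ (D ⊔ A) ⊓ Hy := inf_le_inf_right _ (sup_le_sup_right hKD _)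
    have hhker : h.ker = ((K ⊔ A) ⊓ Hy).subgroupOf ((D ⊔ A) ⊓ Hy) := by
      ext z
      rw [MonoidHom.mem_ker, Subgroup.mem_subgroupOf]
      have hzDA : (z : ↥P) ∈ D ⊔ A := (Subgroup.mem_inf.1 z.2).1
      have hzHy : (z : ↥P) ∈ Hy := (Subgroup.mem_inf.1 z.2).2
      constructor
      · intro h1
        obtain ⟨d', hd', ν', hν', hdec⟩ := (mem_sup_normal hAn).1 hzDA
        have hPz := hP z d' hd' (by
          have heq : d'⁻¹ * (z : ↥P) = ν' := by rw [← hdec]; group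
          rw [heq]; exact hν')
        rw [hPz] at h1
        have hd'K : d' ∈ K := by
          have hm : (⟨d', hd'⟩ : ↥D) ∈ f.ker := h1
          rw [hker] at hm
          exact (Subgroup.mem_subgroupOf).1 hm
        refine Subgroup.mem_inf.2 ⟨?_, hzHy⟩
        rw [← hdec]
        exact Subgroup.mul_mem_sup hd'K hν'
      · intro h1
        obtain ⟨k, hk, ν, hν, hdec⟩ := (mem_sup_normal hAn).1 (Subgroup.mem_inf.1 h1).1
        have hPz := hP z k (hKD hk) (by
          have heq : k⁻¹ * (z : ↥P) = ν := by rw [← hdec]; group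
          rw [heq]; exact hν)
        rw [hPz]
        have hm : (⟨k, hKD hk⟩ : ↥D) ∈ f.ker := by
          rw [hker, Subgroup.mem_subgroupOf]
          exact hk
        exact hm
    have hchHy : ChainFT SubStep ((D ⊔ A) ⊓ Hy) Hy (l.map (fun X => (X ⊔ A) ⊓ Hy)) := by
      have hm := hch.map (fun X => (X ⊔ A) ⊓ Hy) (fun X Y hXY => substep_supinf hAn hXY)
      refine hm.congr_right ?_
      show ((⊤ ⊔ A) ⊓ Hy) = Hy
      simp
    have hchHy' : ChainFT SubStep (((D ⊔ A) ⊓ Hy).subgroupOf Hy) ⊤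
        ((l.map (fun X => (X ⊔ A) ⊓ Hy)).map (fun X => X.subgroupOf Hy)) := by
      have hm := hchHy.map (fun X => X.subgroupOf Hy)
        (fun X Y hXY => substep_subgroupOf hXY)
      exact hm.congr_right (Subgroup.subgroupOf_self Hy)
    have h2surj : Function.Surjective (h.comp
        (Subgroup.subgroupOfEquivOfLe (inf_le_right : (D ⊔ A) ⊓ Hy ≤ Hy)).toMonoidHom) :=
      hhsurj.comp (Subgroup.subgroupOfEquivOfLe _).surjective
    have h2ker : (h.comp
        (Subgroup.subgroupOfEquivOfLe (inf_le_right : (D ⊔ A) ⊓ Hy ≤ Hy)).toMonoidHom).ker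
        = (((K ⊔ A) ⊓ Hy).subgroupOf Hy).subgroupOf (((D ⊔ A) ⊓ Hy).subgroupOf Hy) := by
      ext z
      rw [MonoidHom.mem_ker, Subgroup.mem_subgroupOf, Subgroup.mem_subgroupOf]
      have hcoe : ((Subgroup.subgroupOfEquivOfLe
          (inf_le_right : (D ⊔ A) ⊓ Hy ≤ Hy) z : ↥((D ⊔ A) ⊓ Hy)) : ↥P)
          = ((z : ↥Hy) : ↥P) := rfl
      have hstep : (h.comp (Subgroup.subgroupOfEquivOfLe
          (inf_le_right : (D ⊔ A) ⊓ Hy ≤ Hy)).toMonoidHom) z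
          = h (Subgroup.subgroupOfEquivOfLe (inf_le_right : (D ⊔ A) ⊓ Hy ≤ Hy) z) := rfl
      rw [hstep, ← MonoidHom.mem_ker, hhker, Subgroup.mem_subgroupOf, hcoe]
    have hKsub : ((K ⊔ A) ⊓ Hy).subgroupOf Hy ≤ ((D ⊔ A) ⊓ Hy).subgroupOf Hy := by
      intro x hx
      rw [Subgroup.mem_subgroupOf] at hx ⊢
      exact hKstle hx
    have hfinal : HasCyclicCompFactor ↥Hy p :=
      hasCyclic_of_section hp hKsub hchHy' _ h2surj h2ker
    exact hasCyclic_of_mulEquiv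
      (Subgroup.subgroupOfEquivOfLe (inf_le_left : Q ≤ P)) hfinal
  · -- full image on D ⊓ A : contradicts semisimplicity of the socle factor A
    exfalso
    have hchA : ChainFT SubStep ((D ⊓ A).subgroupOf A) ⊤
        (l.map (fun X => (X ⊓ A).subgroupOf A)) := by
      have hm := hch.map (fun X => (X ⊓ A).subgroupOf A)
        (fun X Y hXY => substep_subgroupOf (substep_inf hXY))
      refine hm.congr_right ?_
      show ((⊤ ⊓ A : Subgroup ↥P)).subgroupOf A = ⊤
      simp [Subgroup.subgroupOf_self]
    have hsurj' : Function.Surjective (f'.comp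
        (Subgroup.subgroupOfEquivOfLe (inf_le_right : D ⊓ A ≤ A)).toMonoidHom) := by
      intro a
      have ha : a ∈ f'.range := hrange ▸ Subgroup.mem_top a
      obtain ⟨x, hx⟩ := ha
      exact ⟨(Subgroup.subgroupOfEquivOfLe (inf_le_right : D ⊓ A ≤ A)).symm x, by simpa using hx⟩
    exact semisimple_no_section (Nat.card ↥A) ↥A le_rfl 𝒮 h𝒮n h𝒮s h𝒮nc h𝒮gen p hp
      ((D ⊓ A).subgroupOf A) _ hchA _ hsurj'

end CompAux

open CompAux in
/-- Let `P` be a primitive permutation group on a finite set `Δ` whose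
socle is non-abelian and let `P_y` be a point stabiliser. Then every abelian composition
factor of `P` is a composition factor of `P_y`, i.e. `Comp_A(P) ⊆ Comp_A(P_y)`. -/
theorem compA_subset_of_nonabelian_socle {Δ : Type} [Fintype Δ]
    (P : Subgroup (Equiv.Perm Δ)) (hprim : IsPrimitivePermGroup P)
    (hsocle : ¬ IsMulCommutative ↥(socle ↥P)) (y : Δ) :
    ∀ p : ℕ, p.Prime → HasCyclicCompFactor ↥P p →
      HasCyclicCompFactor ↥(P ⊓ MulAction.stabilizer (Equiv.Perm Δ) y) p := by
  intro p hp hfac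
  obtain ⟨A, hAn, hAbot, hAmin, hAnc⟩ := exists_minimal_normal_noncomm hsocle
  obtain ⟨𝒮, h𝒮n, h𝒮s, h𝒮nc, h𝒮gen⟩ := chief_decomp A hAn hAbot hAmin hAnc
  obtain ⟨n, c, hc, i, f, hfs, hker⟩ := hfac
  obtain ⟨l, hch⟩ := chain_of_compositionChain hc i
  exact main_section_transfer P hprim A hAn hAbot 𝒮 h𝒮n h𝒮s h𝒮nc h𝒮gen y hp
    (c i.succ) (c i.castSucc) (hc.2.2 i).1.le l hch f hfs hker
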